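/- For every m < 1, the derivative of the logarithmic derivative of the complete elliptic integral of the first kind satisfies (K'/K)'(m) ≥ 2 (K'(m)/K(m))², and in particular (K'/K)'(m) > 0. -/

import Mathlib

open MeasureTheory Set intervalIntegral Metric

/-- The complete elliptic integral of the first kind,
`K(m) = ∫₀¹ dζ / √((1-ζ²)(1-mζ²))`, defined for `m < 1`. -/
noncomputable def ellipticK (m : ℝ) : ℝ :=
  ∫ ζ in (0:ℝ)..1, 1 / Real.sqrt ((1 - ζ ^ 2) * (1 - m * ζ ^ 2))

namespace EllK

/-- The integrand family: `g k x t = t^(2k) / (√(1-t²) · √(1-x t²)^(2k+1))`. -/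
noncomputable def g (k : ℕ) (x t : ℝ) : ℝ :=
  t ^ (2*k) / (Real.sqrt (1 - t^2) * Real.sqrt (1 - x*t^2) ^ (2*k+1))

noncomputable def G (k : ℕ) (x : ℝ) : ℝ := ∫ t in (0:ℝ)..1, g k x t

lemma q_pos {x t : ℝ} (hx : x < 1) (ht0 : 0 ≤ t) (ht1 : t ≤ 1) : 0 < 1 - x*t^2 := by
  rcases le_or_gt x 0 with h | h
  · nlinarith [sq_nonneg t]
  · nlinarith [mul_nonneg (sub_nonneg.2 ht1) ht0, mul_nonneg h.le ht0]

lemma g_nonneg (k : ℕ) (x t : ℝ) (ht : 0 ≤ t) : 0 ≤ g k x t := by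
  apply div_nonneg (pow_nonneg ht _)
  exact mul_nonneg (Real.sqrt_nonneg _) (pow_nonneg (Real.sqrt_nonneg _) _)

lemma g_aesm (k : ℕ) (x : ℝ) (μ : Measure ℝ) : AEStronglyMeasurable (g k x) μ := by
  apply Measurable.aestronglyMeasurable
  apply Measurable.div
  · exact measurable_id.pow_const _
  · apply Measurable.mul
    · exact (Real.continuous_sqrt.comp (by continuity)).measurable
    · exact ((Real.continuous_sqrt.comp (by continuity)).measurable).pow_const _

/-- bound constant -/
noncomputable def C (k : ℕ) (m' : ℝ) : ℝ := (Real.sqrt (min (1 - m') 1))⁻¹ ^ (2*k+1)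

lemma C_nonneg (k : ℕ) (m' : ℝ) : 0 ≤ C k m' :=
  pow_nonneg (inv_nonneg.2 (Real.sqrt_nonneg _)) _

lemma g_le {m' : ℝ} (hm' : m' < 1) (k : ℕ) {x t : ℝ} (hx : x ≤ m')
    (ht0 : 0 ≤ t) (ht1 : t ≤ 1) :
    g k x t ≤ C k m' * (1 - t) ^ (-(1/2) : ℝ) := by
  have h1t : (0:ℝ) ≤ 1 - t := by linarith
  set δ : ℝ := Real.sqrt (min (1 - m') 1) with hδ
  have hδpos : 0 < δ := Real.sqrt_pos.2 (lt_min (by linarith) one_pos)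
  rcases eq_or_lt_of_le ht1 with rfl | ht1'
  · have : g k x 1 = 0 := by
      simp [g, show (1:ℝ) - 1^2 = 0 by ring]
    rw [this]
    exact mul_nonneg (C_nonneg k m') (Real.rpow_nonneg h1t _)
  -- now t < 1
  have hq : min (1 - m') 1 ≤ 1 - x*t^2 := by
    rcases le_or_gt x 0 with h | h
    · refine le_trans (min_le_right _ _) ?_
      nlinarith [sq_nonneg t]
    · refine le_trans (min_le_left _ _) ?_
      nlinarith [mul_nonneg (sub_nonneg.2 ht1) ht0, mul_nonneg h.le ht0]
  have hs : δ ≤ Real.sqrt (1 - x*t^2) := Real.sqrt_le_sqrt hq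
  have hu : Real.sqrt (1 - t) ≤ Real.sqrt (1 - t^2) := by
    apply Real.sqrt_le_sqrt; nlinarith
  have hupos : 0 < Real.sqrt (1 - t) := Real.sqrt_pos.2 (by linarith)
  have hnum : t ^ (2*k) ≤ 1 := pow_le_one₀ ht0 ht1
  have hden : Real.sqrt (1-t) * δ ^ (2*k+1) ≤
      Real.sqrt (1 - t^2) * Real.sqrt (1 - x*t^2) ^ (2*k+1) := by
    apply mul_le_mul hu (pow_le_pow_left₀ hδpos.le hs _) (by positivity) (Real.sqrt_nonneg _)
  have := div_le_div₀ (zero_le_one) hnum (by positivity) hden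
  refine le_trans this (le_of_eq ?_)
  rw [Real.rpow_neg h1t, show ((1:ℝ)/2) = (2:ℝ)⁻¹ by norm_num]
  rw [show (1-t) ^ ((2:ℝ)⁻¹) = Real.sqrt (1-t) by rw [Real.sqrt_eq_rpow]; norm_num]
  rw [C, ← hδ, inv_pow]
  field_simp [hδpos.ne']

lemma bound_int (c : ℝ) : IntervalIntegrable (fun t => c * (1-t) ^ (-(1/2):ℝ)) volume 0 1 := by
  apply IntervalIntegrable.const_mul
  have h := (intervalIntegrable_rpow' (r := (-(1/2):ℝ)) (by norm_num) (a := 0) (b := 1)).comp_sub_left 1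
  simpa using h.symm

lemma g_intInt {x : ℝ} (hx : x < 1) (k : ℕ) : IntervalIntegrable (g k x) volume 0 1 := by
  rw [intervalIntegrable_iff_integrableOn_Ioo_of_le zero_le_one]
  have hb : IntegrableOn (fun t => C k x * (1-t)^(-(1/2):ℝ)) (Ioo (0:ℝ) 1) volume := by
    have := bound_int (C k x)
    rwa [intervalIntegrable_iff_integrableOn_Ioo_of_le zero_le_one] at this
  refine Integrable.mono' hb (g_aesm k x _) ?_
  filter_upwards [ae_restrict_mem measurableSet_Ioo] with t ht
  rw [Real.norm_eq_abs, abs_of_nonneg (g_nonneg k x t ht.1.le)]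
  exact g_le hx k le_rfl ht.1.le ht.2.le

lemma G_pos {x : ℝ} (hx : x < 1) (k : ℕ) : 0 < G k x := by
  apply intervalIntegral_pos_of_pos_on (g_intInt hx k) _ one_pos
  intro t ht
  have h1 : 0 < 1 - t^2 := by nlinarith [ht.1, ht.2]
  have h2 : 0 < 1 - x*t^2 := q_pos hx ht.1.le ht.2.le
  exact div_pos (pow_pos ht.1 _)
    (mul_pos (Real.sqrt_pos.2 h1) (pow_pos (Real.sqrt_pos.2 h2) _))

lemma hasDerivAt_g {k : ℕ} {x t : ℝ} (hx : x < 1) (ht : t ∈ Ioo (0:ℝ) 1) :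
    HasDerivAt (fun y => g k y t) ((2*(k:ℝ)+1)/2 * g (k+1) x t) x := by
  have hu : 0 < 1 - t^2 := by nlinarith [ht.1, ht.2]
  have hq : 0 < 1 - x*t^2 := q_pos hx ht.1.le ht.2.le
  have hs : 0 < Real.sqrt (1 - x*t^2) := Real.sqrt_pos.2 hq
  have hup : 0 < Real.sqrt (1 - t^2) := Real.sqrt_pos.2 hu
  have h1 : HasDerivAt (fun y : ℝ => 1 - y*t^2) (-(t^2)) x := by
    simpa using ((hasDerivAt_id x).mul_const (t^2)).const_sub 1
  have h2 : HasDerivAt (fun y : ℝ => Real.sqrt (1 - y*t^2))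
      (1/(2*Real.sqrt (1 - x*t^2)) * (-(t^2))) x :=
    (Real.hasDerivAt_sqrt hq.ne').comp x h1
  have h3 := (h2.pow (2*k+1)).const_mul (Real.sqrt (1 - t^2))
  have h4 := (hasDerivAt_const x ((t:ℝ) ^ (2*k))).div h3
    (mul_pos hup (pow_pos hs _)).ne'
  have h4 : HasDerivAt (fun y => g k y t) _ x := h4
  convert h4 using 1
  simp only [Nat.add_sub_cancel, Pi.pow_apply]
  unfold g
  push_cast
  set s := Real.sqrt (1 - x*t^2)
  set u := Real.sqrt (1 - t^2)
  field_simp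
  ring

lemma ae_ne_one : ∀ᵐ t : ℝ ∂volume, t ≠ 1 := by
  rw [ae_iff]
  simp only [not_not, setOf_eq_eq_singleton]
  exact Real.volume_singleton

lemma hasDerivAt_G {x₀ : ℝ} (hx₀ : x₀ < 1) (k : ℕ) :
    HasDerivAt (G k) ((2*(k:ℝ)+1)/2 * G (k+1) x₀) x₀ := by
  have hεpos : 0 < (1 - x₀)/2 := by linarith
  set m' := (1 + x₀)/2 with hm'def
  have hm' : m' < 1 := by rw [hm'def]; linarith
  have hball : ∀ x ∈ ball x₀ ((1 - x₀)/2), x ≤ m' := by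
    intro x hx
    have := abs_lt.1 (mem_ball_iff_norm.1 hx)
    rw [hm'def]; linarith [this.2]
  have key := intervalIntegral.hasDerivAt_integral_of_dominated_loc_of_deriv_le
    (F := fun x t => g k x t) (F' := fun x t => (2*(k:ℝ)+1)/2 * g (k+1) x t)
    (bound := fun t => ((2*(k:ℝ)+1)/2 * C (k+1) m') * (1-t)^(-(1/2):ℝ))
    (a := 0) (b := 1) (x₀ := x₀) (μ := volume) (ball_mem_nhds x₀ hεpos)
    (Filter.Eventually.of_forall fun x => g_aesm k x _)
    (g_intInt hx₀ k)
    ((g_aesm (k+1) x₀ _).const_mul _)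
    ?_ (bound_int _) ?_
  · have h2 := key.2
    rwa [intervalIntegral.integral_const_mul] at h2
  · filter_upwards with t htmem x hx
    rw [uIoc_of_le zero_le_one] at htmem
    have ht0 : 0 ≤ t := htmem.1.le
    rw [Real.norm_eq_abs,
      abs_of_nonneg (mul_nonneg (by positivity) (g_nonneg _ _ _ ht0)), mul_assoc]
    exact mul_le_mul_of_nonneg_left (g_le hm' (k+1) (hball x hx) ht0 htmem.2)
      (by positivity)
  · filter_upwards [ae_ne_one] with t ht1 htmem x hx
    rw [uIoc_of_le zero_le_one] at htmem
    have ht : t ∈ Ioo (0:ℝ) 1 := ⟨htmem.1, lt_of_le_of_ne htmem.2 ht1⟩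
    exact hasDerivAt_g (lt_of_le_of_lt (hball x hx) hm') ht

lemma ellipticK_eq (x : ℝ) : ellipticK x = G 0 x := by
  unfold ellipticK G
  apply intervalIntegral.integral_congr
  intro t ht
  rw [uIcc_of_le zero_le_one] at ht
  have h : (0:ℝ) ≤ 1 - t^2 := by nlinarith [ht.1, ht.2]
  simp [g, Real.sqrt_mul h]

lemma hasDerivAt_ellipticK {x : ℝ} (hx : x < 1) :
    HasDerivAt ellipticK (1/2 * G 1 x) x := by
  have h := hasDerivAt_G hx 0
  rw [show ellipticK = G 0 from funext ellipticK_eq]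
  convert h using 1
  norm_num

lemma alg (I0 I1 t s u : ℝ) (hs : 0 < s) (hu : 0 < u) :
    0 ≤ I0^2 * (t^4/(u*s^5)) - 2*I0*I1*(t^2/(u*s^3)) + I1^2 * (1/(u*s)) := by
  have key : I0^2 * (t^4/(u*s^5)) - 2*I0*I1*(t^2/(u*s^3)) + I1^2 * (1/(u*s))
      = (t^2*I0 - s^2*I1)^2 / (u*s^5) := by
    field_simp
    ring
  rw [key]
  positivity

lemma cs {m : ℝ} (hm : m < 1) : (G 1 m)^2 ≤ G 0 m * G 2 m := by
  have h0 := g_intInt hm 0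
  have h1 := g_intInt hm 1
  have h2 := g_intInt hm 2
  set I0 := G 0 m with hI0def
  set I1 := G 1 m with hI1def
  have key : 0 ≤ ∫ t in (0:ℝ)..1,
      (I0^2 * g 2 m t - 2*I0*I1 * g 1 m t + I1^2 * g 0 m t) := by
    apply intervalIntegral.integral_nonneg zero_le_one
    intro t ht
    have hq : 0 < 1 - m*t^2 := q_pos hm ht.1 ht.2
    have hs : 0 < Real.sqrt (1-m*t^2) := Real.sqrt_pos.2 hq
    have hu : 0 ≤ Real.sqrt (1-t^2) := Real.sqrt_nonneg _
    rcases eq_or_lt_of_le hu with h|h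
    · simp [g, ← h]
    · have e0 : g 0 m t = 1/(Real.sqrt (1-t^2) * Real.sqrt (1-m*t^2)) := by
        norm_num [g]
      have e1 : g 1 m t = t^2/(Real.sqrt (1-t^2) * Real.sqrt (1-m*t^2)^3) := by
        norm_num [g]
      have e2 : g 2 m t = t^4/(Real.sqrt (1-t^2) * Real.sqrt (1-m*t^2)^5) := by
        norm_num [g]
      rw [e0, e1, e2]
      exact alg I0 I1 t _ _ hs h
  have splitv : (∫ t in (0:ℝ)..1,
        (I0^2 * g 2 m t - 2*I0*I1 * g 1 m t + I1^2 * g 0 m t))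
      = I0^2 * G 2 m - 2*I0*I1*I1 + I1^2*I0 := by
    rw [intervalIntegral.integral_add ((h2.const_mul _).sub (h1.const_mul _))
        (h0.const_mul _),
      intervalIntegral.integral_sub (h2.const_mul _) (h1.const_mul _),
      intervalIntegral.integral_const_mul, intervalIntegral.integral_const_mul,
      intervalIntegral.integral_const_mul]
    rfl
  rw [splitv] at key
  have hI0 : 0 < I0 := G_pos hm 0
  nlinarith [key, hI0]

end EllK

open EllK

/-- For every `m < 1`, `(K'/K)'(m) ≥ 2 (K'(m)/K(m))²` and in particular `(K'/K)'(m) > 0`. -/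
theorem deriv_logDeriv_ellipticK (m : ℝ) (hm : m < 1) :
    deriv (fun x : ℝ => deriv ellipticK x / ellipticK x) m ≥
      2 * (deriv ellipticK m / ellipticK m) ^ 2 ∧
    0 < deriv (fun x : ℝ => deriv ellipticK x / ellipticK x) m := by
  have hI0 : 0 < G 0 m := G_pos hm 0
  have hI1 : 0 < G 1 m := G_pos hm 1
  have hKm : ellipticK m = G 0 m := ellipticK_eq m
  have hK'm : deriv ellipticK m = 1/2 * G 1 m := (hasDerivAt_ellipticK hm).deriv
  have hc : HasDerivAt (fun x => 1/2 * G 1 x) (3/4 * G 2 m) m := by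
    have := (hasDerivAt_G hm 1).const_mul (1/2 : ℝ)
    refine this.congr_deriv ?_
    push_cast
    ring
  have hd : HasDerivAt (G 0) (1/2 * G 1 m) m := by
    have := hasDerivAt_G hm 0
    refine this.congr_deriv ?_
    norm_num
  have hquot := hc.div hd hI0.ne'
  have hev : (fun x : ℝ => deriv ellipticK x / ellipticK x)
      =ᶠ[nhds m] (fun x => (1/2 * G 1 x) / G 0 x) := by
    filter_upwards [Iio_mem_nhds hm] with x hx
    rw [(hasDerivAt_ellipticK hx).deriv, ellipticK_eq]
  have hderiv : deriv (fun x : ℝ => deriv ellipticK x / ellipticK x) m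
      = ((3/4 * G 2 m) * G 0 m
          - (1/2 * G 1 m) * (1/2 * G 1 m)) / (G 0 m)^2 := by
    rw [hev.deriv_eq]; exact hquot.deriv
  have hcs := cs hm
  have hge : deriv (fun x : ℝ => deriv ellipticK x / ellipticK x) m
      ≥ 2 * (deriv ellipticK m / ellipticK m) ^ 2 := by
    rw [hderiv, hK'm, hKm, ge_iff_le,
      show 2*((1/2 * G 1 m)/(G 0 m))^2 = (G 1 m^2/2)/(G 0 m)^2 by ring,
      div_le_div_iff₀ (by positivity) (by positivity)]
    nlinarith [mul_le_mul_of_nonneg_right hcs (sq_nonneg (G 0 m)), sq_nonneg (G 0 m), hI0]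
  refine ⟨hge, lt_of_lt_of_le ?_ hge⟩
  rw [hK'm, hKm]
  exact mul_pos two_pos (pow_pos (div_pos (by linarith) hI0) 2)
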